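/- For every dimension d ≥ 1, every p ∈ (1,∞) with Hölder conjugate q = p/(p−1) and every α > d/q, letting 𝒮𝓑₀(ε) = ∫_{ℝ^d} (∫₀^{1/ε} s^{α−1} (1+s)^{−d} exp(−|y|²/(2(1+s))) ds)^{p/2} dy, there exist constants 0 < c ≤ C (depending only on α, p and d) such that for all sufficiently small ε > 0, c ≤ ε^{p(α − d/q)/2} 𝒮𝓑₀(ε) ≤ C; in particular ε^{(α − d/q)/2} 𝒮𝓑₀(ε)^{1/p} is bounded above and below by positive constants as ε → 0⁺. -/

import Mathlib

open MeasureTheory ProbabilityTheory Real Filter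
open scoped ENNReal Topology Classical

noncomputable section

abbrev Esp (d : ℕ) := EuclideanSpace ℝ (Fin d)

/-- `𝒮𝓑₀(ε, α, p, d)`. -/
def SB0 (d : ℕ) (α p ε : ℝ) : ℝ :=
  ∫ y : Esp d, (∫ s in Set.Ioc (0 : ℝ) (1 / ε),
      s ^ (α - 1) * (1 + s) ^ (-(d : ℝ)) * Real.exp (-‖y‖ ^ 2 / (2 * (1 + s)))) ^ (p / 2)

namespace SB0Aux

open Set Metric

/-- integrability of `s ^ a * (1+s) ^ b` on `Ioc 0 T`. -/
lemma integrableOn_rpow_mul {a : ℝ} (b : ℝ) {T : ℝ} (ha : -1 < a) (hT : 0 < T) :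
    IntegrableOn (fun s : ℝ => s ^ a * (1 + s) ^ b) (Ioc 0 T) := by
  have hbase : IntegrableOn (fun s : ℝ => s ^ a) (Ioc 0 T) :=
    (intervalIntegrable_iff_integrableOn_Ioc_of_le hT.le).1 (intervalIntegral.intervalIntegrable_rpow' ha)
  set M : ℝ := max 1 ((1 + T) ^ b) with hM
  refine ((hbase.const_mul M).mono' ?_ ?_)
  · exact ((measurable_id.pow_const a).mul
      ((measurable_const.add measurable_id).pow_const b)).aestronglyMeasurable
  · filter_upwards [ae_restrict_mem measurableSet_Ioc] with s hs
    have hs0 : (0:ℝ) < s := hs.1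
    have h1s : (0:ℝ) ≤ 1 + s := by linarith
    have hb : (1 + s) ^ b ≤ M := by
      rcases le_or_gt 0 b with hbb | hbb
      · exact le_trans (Real.rpow_le_rpow h1s (by linarith [hs.2]) hbb) (le_max_right _ _)
      · exact le_trans (Real.rpow_le_one_of_one_le_of_nonpos (by linarith) hbb.le)
          (le_max_left _ _)
    have : ‖s ^ a * (1 + s) ^ b‖ = s ^ a * (1 + s) ^ b := by
      rw [Real.norm_eq_abs, abs_of_nonneg]
      positivity
    rw [this]
    calc s ^ a * (1 + s) ^ b ≤ s ^ a * M :=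
          mul_le_mul_of_nonneg_left hb (by positivity)
      _ = M * s ^ a := by ring

/-- Key one-dimensional upper bound. -/
lemma integral_aux_le {a δ β T : ℝ} (ha : 0 < a) (hδ : 0 ≤ δ) (hβ : 0 < β)
    (htop : a - δ ≤ β) (hT : 1 ≤ T) :
    ∫ s in Ioc (0:ℝ) T, s ^ (a - 1) * (1 + s) ^ (-δ) ≤ (1/a + 1/β) * T ^ β := by
  have h0T : (0:ℝ) < T := lt_of_lt_of_le one_pos hT
  have hint : IntegrableOn (fun s : ℝ => s ^ (a-1) * (1+s) ^ (-δ)) (Ioc 0 T) :=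
    integrableOn_rpow_mul _ (by linarith) h0T
  have hTβ : (1:ℝ) ≤ T ^ β := Real.one_le_rpow hT hβ.le
  have hsplit : Ioc (0:ℝ) T = Ioc 0 1 ∪ Ioc 1 T :=
    (Set.Ioc_union_Ioc_eq_Ioc zero_le_one hT).symm
  have hint1 : IntegrableOn (fun s : ℝ => s ^ (a-1) * (1+s) ^ (-δ)) (Ioc 0 1) := by
    refine hint.mono_set ?_
    rw [hsplit]; exact subset_union_left
  have hint2 : IntegrableOn (fun s : ℝ => s ^ (a-1) * (1+s) ^ (-δ)) (Ioc 1 T) := by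
    refine hint.mono_set ?_
    rw [hsplit]; exact subset_union_right
  have hbase1 : IntegrableOn (fun s : ℝ => s ^ (a-1)) (Ioc 0 1) :=
    (intervalIntegrable_iff_integrableOn_Ioc_of_le zero_le_one).1
      (intervalIntegral.intervalIntegrable_rpow' (by linarith))
  have hbase2 : IntegrableOn (fun s : ℝ => s ^ (β-1)) (Ioc 1 T) := by
    refine (((intervalIntegrable_iff_integrableOn_Ioc_of_le h0T.le).1
      (intervalIntegral.intervalIntegrable_rpow' (r := β - 1) (by linarith))).mono_set ?_)
    exact Ioc_subset_Ioc zero_le_one le_rfl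
  rw [hsplit, setIntegral_union (Set.Ioc_disjoint_Ioc_of_le le_rfl) measurableSet_Ioc hint1 hint2]
  have hp1 : ∫ s in Ioc (0:ℝ) 1, s ^ (a-1) * (1+s) ^ (-δ) ≤ 1/a := by
    have hle : ∫ s in Ioc (0:ℝ) 1, s ^ (a-1) * (1+s) ^ (-δ) ≤ ∫ s in Ioc (0:ℝ) 1, s ^ (a-1) := by
      refine setIntegral_mono_on hint1 hbase1 measurableSet_Ioc ?_
      intro s hs
      have hs0 : (0:ℝ) < s := hs.1
      have h1 : (1 + s) ^ (-δ) ≤ 1 :=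
        Real.rpow_le_one_of_one_le_of_nonpos (by linarith) (by linarith)
      calc s ^ (a-1) * (1+s) ^ (-δ) ≤ s ^ (a-1) * 1 :=
            mul_le_mul_of_nonneg_left h1 (by positivity)
        _ = s ^ (a-1) := mul_one _
    have heq : ∫ s in Ioc (0:ℝ) 1, s ^ (a-1) = 1/a := by
      rw [← intervalIntegral.integral_of_le zero_le_one,
        integral_rpow (Or.inl (by linarith : (-1:ℝ) < a - 1))]
      rw [sub_add_cancel, Real.one_rpow, Real.zero_rpow (ne_of_gt ha)]
      ring
    linarith
  have hp2 : ∫ s in Ioc (1:ℝ) T, s ^ (a-1) * (1+s) ^ (-δ) ≤ T ^ β / β := by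
    have hle : ∫ s in Ioc (1:ℝ) T, s ^ (a-1) * (1+s) ^ (-δ) ≤ ∫ s in Ioc (1:ℝ) T, s ^ (β-1) := by
      refine setIntegral_mono_on hint2 hbase2 measurableSet_Ioc ?_
      intro s hs
      have hs1 : (1:ℝ) ≤ s := hs.1.le
      have hs0 : (0:ℝ) < s := by linarith
      have h1 : (1 + s) ^ (-δ) ≤ s ^ (-δ) :=
        Real.rpow_le_rpow_of_nonpos hs0 (by linarith) (by linarith)
      calc s ^ (a-1) * (1+s) ^ (-δ) ≤ s ^ (a-1) * s ^ (-δ) :=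
            mul_le_mul_of_nonneg_left h1 (by positivity)
        _ = s ^ (a-1 + -δ) := (Real.rpow_add hs0 _ _).symm
        _ ≤ s ^ (β-1) := Real.rpow_le_rpow_of_exponent_le hs1 (by linarith)
    have heq : ∫ s in Ioc (1:ℝ) T, s ^ (β-1) = (T ^ β - 1) / β := by
      rw [← intervalIntegral.integral_of_le hT,
        integral_rpow (Or.inl (by linarith : (-1:ℝ) < β - 1))]
      rw [sub_add_cancel, Real.one_rpow]
    rw [heq] at hle
    have h2 : (T ^ β - 1) / β ≤ T ^ β / β := by gcongr; linarith
    linarith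
  calc (∫ s in Ioc (0:ℝ) 1, s ^ (a-1) * (1+s) ^ (-δ)) +
        ∫ s in Ioc (1:ℝ) T, s ^ (a-1) * (1+s) ^ (-δ)
      ≤ 1/a + T ^ β / β := add_le_add hp1 hp2
    _ ≤ (1/a) * T ^ β + (1/β) * T ^ β := by
        have h1 : 1/a ≤ (1/a) * T ^ β := by
          nlinarith [ (by positivity : (0:ℝ) < 1/a) ]
        have h2 : T ^ β / β = (1/β) * T ^ β := by ring
        linarith
    _ = (1/a + 1/β) * T ^ β := by ring


/-- Integrability of the Gaussian on `Esp d`. -/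
lemma integrable_gauss (d : ℕ) {b : ℝ} (hb : 0 < b) :
    Integrable (fun y : Esp d => rexp (-(b * ‖y‖ ^ 2))) := by
  have h := (GaussianFourier.integrable_cexp_neg_mul_sq_norm_add (V := Esp d)
      (b := (b : ℂ)) (by simpa using hb) 0 0).norm
  have heq : (fun a : Esp d => ‖Complex.exp (-(b:ℂ) * (‖a‖:ℂ) ^ 2
      + 0 * ((inner ℝ (0 : Esp d) a : ℝ) : ℂ))‖) = fun y : Esp d => rexp (-(b * ‖y‖ ^ 2)) := by
    funext y
    have h2 : (-(b:ℂ) * (‖y‖:ℂ) ^ 2 + 0 * ((inner ℝ (0 : Esp d) y : ℝ) : ℂ))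
        = ((-(b * ‖y‖ ^ 2) : ℝ) : ℂ) := by push_cast; ring
    rw [h2, Complex.norm_exp, Complex.ofReal_re]
  rw [heq] at h
  exact h

lemma lintegral_gauss (d : ℕ) {b : ℝ} (hb : 0 < b) :
    (∫⁻ y : Esp d, ENNReal.ofReal (rexp (-(b * ‖y‖ ^ 2))))
      = ENNReal.ofReal ((π / b) ^ ((d:ℝ) / 2)) := by
  rw [← ofReal_integral_eq_lintegral_ofReal (integrable_gauss d hb)
    (Filter.Eventually.of_forall fun y => (Real.exp_pos _).le)]
  congr 1
  have h := GaussianFourier.integral_rexp_neg_mul_sq_norm (V := Esp d) hb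
  simp only [neg_mul] at h
  rw [show (fun y : Esp d => rexp (-(b * ‖y‖ ^ 2))) = fun y : Esp d => rexp (-(b * ‖y‖ ^ 2)) from rfl]
  rw [h, finrank_euclideanSpace_fin]

/-- explicit constant for `(1+v)^κ e^{-v/2} ≤ CK κ`. -/
def CK (κ : ℝ) : ℝ := (2 * ((⌈κ⌉₊ : ℝ) + 1)) ^ (⌈κ⌉₊ + 1)

lemma CK_pos (κ : ℝ) : 0 < CK κ := by
  unfold CK; positivity

lemma one_add_rpow_mul_exp_le {κ : ℝ} (hκ : 0 ≤ κ) {v : ℝ} (hv : 0 ≤ v) :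
    (1 + v) ^ κ * rexp (-(v / 2)) ≤ CK κ := by
  set m : ℕ := ⌈κ⌉₊ + 1 with hm
  have hm1 : (1:ℝ) ≤ (m:ℝ) := by
    have : (1:ℕ) ≤ m := Nat.succ_le_succ (Nat.zero_le _)
    exact_mod_cast this
  have hm0 : 0 < (m:ℝ) := by linarith
  have hκm : κ ≤ (m:ℝ) := by
    have h1 := Nat.le_ceil κ
    have h2 : ((⌈κ⌉₊ : ℝ)) ≤ (m:ℝ) := by
      rw [hm]; push_cast; linarith
    linarith
  have h1v : (1:ℝ) ≤ 1 + v := by linarith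
  have h1 : (1 + v) ^ κ ≤ (1 + v) ^ ((m:ℕ):ℝ) :=
    Real.rpow_le_rpow_of_exponent_le h1v hκm
  have h2 : (1 + v) ^ ((m:ℕ):ℝ) = (1 + v) ^ (m:ℕ) := Real.rpow_natCast _ m
  have h3 : 1 + v ≤ 2 * m * rexp (v / (2 * m)) := by
    have ha : 1 + v ≤ 2 * m * (1 + v / (2 * m)) := by
      have hh : (2:ℝ) * m * (1 + v / (2 * m)) = 2 * m + v := by field_simp
      rw [hh]; linarith
    have hb2 : 1 + v / (2 * m) ≤ rexp (v / (2 * m)) := by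
      have := Real.add_one_le_exp (v / (2 * m)); linarith
    calc 1 + v ≤ 2 * m * (1 + v / (2 * m)) := ha
      _ ≤ 2 * m * rexp (v / (2 * m)) := by
          apply mul_le_mul_of_nonneg_left hb2; positivity
  have h4 : (1 + v) ^ (m:ℕ) ≤ (2 * m * rexp (v / (2 * m))) ^ (m:ℕ) :=
    pow_le_pow_left₀ (by linarith) h3 m
  have h5 : (2 * (m:ℝ) * rexp (v / (2 * m))) ^ (m:ℕ)
      = (2 * (m:ℝ)) ^ (m:ℕ) * rexp (v / 2) := by
    rw [mul_pow, ← Real.exp_nat_mul]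
    congr 2
    field_simp
  have hCK : CK κ = (2 * (m:ℝ)) ^ (m:ℕ) := by
    unfold CK; rw [hm]; push_cast; ring
  have hexp : rexp (-(v/2)) = (rexp (v/2))⁻¹ := by
    rw [← Real.exp_neg]
  rw [hCK, hexp, mul_inv_le_iff₀' (Real.exp_pos _)]
  calc (1 + v) ^ κ ≤ (1 + v) ^ (m:ℕ) := by rw [← h2]; exact h1
    _ ≤ (2 * (m:ℝ) * rexp (v / (2 * m))) ^ (m:ℕ) := h4
    _ = (2 * (m:ℝ)) ^ (m:ℕ) * rexp (v / 2) := h5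
    _ = rexp (v / 2) * (2 * (m:ℝ)) ^ (m:ℕ) := by ring

lemma lintegral_y_aux (d : ℕ) {κ b : ℝ} (hκ : 0 ≤ κ) (hb : 0 < b) :
    (∫⁻ y : Esp d, ENNReal.ofReal ((1 + ‖y‖ ^ 2) ^ κ * rexp (-(b * ‖y‖ ^ 2))))
      ≤ ENNReal.ofReal ((1 + 1/b) ^ κ * CK κ * (π / (b/2)) ^ ((d:ℝ)/2)) := by
  have key : ∀ y : Esp d, (1 + ‖y‖ ^ 2) ^ κ * rexp (-(b * ‖y‖ ^ 2))
      ≤ (1 + 1/b) ^ κ * CK κ * rexp (-(b/2 * ‖y‖ ^ 2)) := by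
    intro y
    have hu0 : (0:ℝ) ≤ ‖y‖ ^ 2 := by positivity
    set u := ‖y‖ ^ 2 with hu
    have h1 : 1 + u ≤ (1 + 1/b) * (1 + b * u) := by
      have hbu : 0 ≤ b * u := by positivity
      have h1b : 0 ≤ 1/b := by positivity
      have hexp : (1 + 1/b) * (1 + b*u) = 1 + b*u + 1/b + (1/b)*(b*u) := by ring
      have : (1/b)*(b*u) = u := by field_simp
      rw [hexp, this]; linarith
    have h2 : (1+u) ^ κ ≤ (1 + 1/b) ^ κ * (1 + b*u) ^ κ := by
      rw [← Real.mul_rpow (by positivity) (by positivity)]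
      exact Real.rpow_le_rpow (by linarith) h1 hκ
    have h3 : (1 + b*u) ^ κ * rexp (-(b*u/2)) ≤ CK κ := by
      exact one_add_rpow_mul_exp_le hκ (by positivity)
    have hsplit : rexp (-(b*u)) = rexp (-(b*u/2)) * rexp (-(b/2*u)) := by
      rw [← Real.exp_add]; ring_nf
    calc (1+u) ^ κ * rexp (-(b*u))
        ≤ ((1 + 1/b) ^ κ * (1 + b*u) ^ κ) * rexp (-(b*u)) := by
          apply mul_le_mul_of_nonneg_right h2 (Real.exp_pos _).le
      _ = (1 + 1/b) ^ κ * ((1 + b*u) ^ κ * rexp (-(b*u/2))) * rexp (-(b/2*u)) := by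
          rw [hsplit]; ring
      _ ≤ (1 + 1/b) ^ κ * CK κ * rexp (-(b/2*u)) := by
          have hc : (0:ℝ) ≤ (1 + 1/b) ^ κ := by positivity
          exact mul_le_mul_of_nonneg_right (mul_le_mul_of_nonneg_left h3 hc) (Real.exp_pos _).le
  have hCpos : (0:ℝ) ≤ (1 + 1/b) ^ κ * CK κ := by
    have := CK_pos κ; positivity
  calc (∫⁻ y : Esp d, ENNReal.ofReal ((1 + ‖y‖ ^ 2) ^ κ * rexp (-(b * ‖y‖ ^ 2))))
      ≤ ∫⁻ y : Esp d, ENNReal.ofReal ((1 + 1/b) ^ κ * CK κ * rexp (-(b/2 * ‖y‖ ^ 2))) :=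
        lintegral_mono fun y => ENNReal.ofReal_le_ofReal (key y)
    _ = ∫⁻ y : Esp d, ENNReal.ofReal ((1 + 1/b) ^ κ * CK κ)
          * ENNReal.ofReal (rexp (-(b/2 * ‖y‖ ^ 2))) := by
        congr 1; funext y
        rw [← ENNReal.ofReal_mul hCpos]
    _ = ENNReal.ofReal ((1 + 1/b) ^ κ * CK κ)
          * ∫⁻ y : Esp d, ENNReal.ofReal (rexp (-(b/2 * ‖y‖ ^ 2))) := by
        rw [MeasureTheory.lintegral_const_mul' _ _ ENNReal.ofReal_ne_top]
    _ = ENNReal.ofReal ((1 + 1/b) ^ κ * CK κ) * ENNReal.ofReal ((π / (b/2)) ^ ((d:ℝ)/2)) := by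
        rw [lintegral_gauss d (by positivity : (0:ℝ) < b/2)]
    _ = ENNReal.ofReal ((1 + 1/b) ^ κ * CK κ * (π / (b/2)) ^ ((d:ℝ)/2)) := by
        rw [← ENNReal.ofReal_mul hCpos]

/-- Hölder-type inequality for a power of an integral. -/
lemma holder_pow {μ : Measure ℝ} {F W : ℝ → ℝ≥0∞} (hF : AEMeasurable F μ)
    (hW : AEMeasurable W μ) (hWpos : ∀ᵐ s ∂μ, W s ≠ 0 ∧ W s ≠ ⊤) {θ : ℝ} (hθ : 1 ≤ θ) :
    (∫⁻ s, F s ∂μ) ^ θ ≤ (∫⁻ s, F s ^ θ * W s ^ (1-θ) ∂μ) * (∫⁻ s, W s ∂μ) ^ (θ-1) := by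
  rcases eq_or_lt_of_le hθ with h1 | h1
  · subst h1
    simp only [sub_self, ENNReal.rpow_zero, ENNReal.rpow_one, mul_one]
    exact le_rfl
  · have hθ0 : θ ≠ 0 := by positivity
    have hθ10 : θ - 1 ≠ 0 := sub_ne_zero.mpr (ne_of_gt h1)
    set q : ℝ := θ / (θ - 1) with hq
    have hpq : Real.HolderConjugate θ q := Real.HolderConjugate.conjExponent h1
    have key := ENNReal.lintegral_mul_le_Lp_mul_Lq μ hpq
      (f := fun s => F s * W s ^ ((1-θ)/θ)) (g := fun s => W s ^ ((θ-1)/θ))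
      (hF.mul (hW.pow_const _)) (hW.pow_const _)
    have hfg : ∀ᵐ s ∂μ, (fun s => F s * W s ^ ((1-θ)/θ)) s * (fun s => W s ^ ((θ-1)/θ)) s
        = F s := by
      filter_upwards [hWpos] with s hs
      rw [mul_assoc, ← ENNReal.rpow_add _ _ hs.1 hs.2]
      have hz : (1 - θ) / θ + (θ - 1) / θ = 0 := by
        rw [← add_div]; simp
      rw [hz, ENNReal.rpow_zero, mul_one]
    have hL : ∫⁻ s, ((fun s => F s * W s ^ ((1-θ)/θ)) * fun s => W s ^ ((θ-1)/θ)) s ∂μ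
        = ∫⁻ s, F s ∂μ := by
      apply lintegral_congr_ae
      filter_upwards [hfg] with s hs
      simpa using hs
    rw [hL] at key
    have hf : ∀ s, ((fun s => F s * W s ^ ((1-θ)/θ)) s) ^ θ = F s ^ θ * W s ^ (1-θ) := by
      intro s
      rw [ENNReal.mul_rpow_of_nonneg _ _ (by linarith : (0:ℝ) ≤ θ), ← ENNReal.rpow_mul]
      congr 2
      field_simp
    have hg : ∀ s, ((fun s => W s ^ ((θ-1)/θ)) s) ^ q = W s := by
      intro s
      rw [← ENNReal.rpow_mul]
      have : (θ-1)/θ * q = 1 := by rw [hq]; field_simp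
      rw [this, ENNReal.rpow_one]
    simp only [hf, hg] at key
    have key2 := ENNReal.rpow_le_rpow key (by linarith : (0:ℝ) ≤ θ)
    calc (∫⁻ s, F s ∂μ) ^ θ
        ≤ ((∫⁻ s, F s ^ θ * W s ^ (1-θ) ∂μ) ^ (1/θ) * (∫⁻ s, W s ∂μ) ^ (1/q)) ^ θ := key2
      _ = (∫⁻ s, F s ^ θ * W s ^ (1-θ) ∂μ) * (∫⁻ s, W s ∂μ) ^ (θ-1) := by
          rw [ENNReal.mul_rpow_of_nonneg _ _ (by linarith : (0:ℝ) ≤ θ),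
            ← ENNReal.rpow_mul, ← ENNReal.rpow_mul, one_div, inv_mul_cancel₀ hθ0,
            ENNReal.rpow_one]
          congr 1
          rw [hq]
          field_simp


section Main

open Set Metric

variable {d : ℕ} {α : ℝ}

/-- the inner integrand. -/
def kk (d : ℕ) (α : ℝ) (y : Esp d) (s : ℝ) : ℝ :=
  s ^ (α - 1) * (1 + s) ^ (-(d : ℝ)) * Real.exp (-‖y‖ ^ 2 / (2 * (1 + s)))

lemma kk_nonneg (y : Esp d) {s : ℝ} (hs : 0 ≤ s) : 0 ≤ kk d α y s :=
  mul_nonneg (mul_nonneg (Real.rpow_nonneg hs _) (Real.rpow_nonneg (by linarith) _))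
    (Real.exp_pos _).le

lemma kk_meas_prod (d : ℕ) (α : ℝ) :
    Measurable (fun z : Esp d × ℝ => kk d α z.1 z.2) := by
  unfold kk
  refine Measurable.mul (Measurable.mul ?_ ?_) ?_
  · exact measurable_snd.pow_const _
  · exact (measurable_const.add measurable_snd).pow_const _
  · exact (((measurable_fst.norm.pow_const 2).neg).div
      (measurable_const.mul (measurable_const.add measurable_snd))).exp

lemma kk_meas (y : Esp d) : Measurable (kk d α y) :=
  (kk_meas_prod d α).comp (measurable_const.prodMk measurable_id)

lemma kk_le_base (y : Esp d) {s : ℝ} (hs : 0 < s) :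
    kk d α y s ≤ s ^ (α - 1) * (1 + s) ^ (-(d:ℝ)) := by
  have he : rexp (-‖y‖ ^ 2 / (2 * (1 + s))) ≤ 1 := by
    rw [Real.exp_le_one_iff]
    apply div_nonpos_of_nonpos_of_nonneg
    · simp [sq_nonneg]
    · positivity
  have hbase : 0 ≤ s ^ (α - 1) * (1 + s) ^ (-(d:ℝ)) :=
    mul_nonneg (Real.rpow_nonneg hs.le _) (Real.rpow_nonneg (by linarith) _)
  calc kk d α y s ≤ s ^ (α - 1) * (1 + s) ^ (-(d:ℝ)) * 1 :=
        mul_le_mul_of_nonneg_left he hbase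
    _ = _ := mul_one _

lemma kk_intOn (hα : 0 < α) (y : Esp d) {T : ℝ} (hT : 0 < T) :
    IntegrableOn (kk d α y) (Ioc 0 T) := by
  refine (integrableOn_rpow_mul (a := α - 1) (-(d:ℝ)) (by linarith) hT).mono'
    ((kk_meas y).aestronglyMeasurable) ?_
  filter_upwards [ae_restrict_mem measurableSet_Ioc] with s hs
  rw [Real.norm_eq_abs, abs_of_nonneg (kk_nonneg y hs.1.le)]
  exact kk_le_base y hs.1

/-- the inner integral. -/
def Iy (d : ℕ) (α T : ℝ) (y : Esp d) : ℝ := ∫ s in Ioc (0:ℝ) T, kk d α y s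

lemma Iy_nonneg (d : ℕ) (α T : ℝ) (y : Esp d) : 0 ≤ Iy d α T y :=
  setIntegral_nonneg measurableSet_Ioc fun s hs => kk_nonneg y hs.1.le

lemma Iy_meas (d : ℕ) (α T : ℝ) : Measurable (Iy d α T) := by
  have h := ((kk_meas_prod d α).stronglyMeasurable).integral_prod_right'
    (ν := volume.restrict (Ioc (0:ℝ) T))
  exact h.measurable

/-- the main quantity, in `ℝ≥0∞` form. -/
def NN (d : ℕ) (α θ T : ℝ) : ℝ≥0∞ := ∫⁻ y : Esp d, ENNReal.ofReal (Iy d α T y ^ θ)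

lemma ofReal_Iy (hα : 0 < α) {T : ℝ} (hT : 0 < T) (y : Esp d) :
    ENNReal.ofReal (Iy d α T y) = ∫⁻ s in Ioc (0:ℝ) T, ENNReal.ofReal (kk d α y s) :=
  ofReal_integral_eq_lintegral_ofReal (kk_intOn hα y hT)
    (by filter_upwards [ae_restrict_mem measurableSet_Ioc] with s hs
        exact kk_nonneg y hs.1.le)

lemma SB0_eq (hα : 0 < α) (p : ℝ) {ε : ℝ} (hε : 0 < ε) :
    SB0 d α p ε = (NN d α (p/2) (1/ε)).toReal := by
  have h1 : SB0 d α p ε = ∫ y : Esp d, (Iy d α (1/ε) y) ^ (p/2) := rfl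
  rw [h1, MeasureTheory.integral_eq_lintegral_of_nonneg_ae
    (Filter.Eventually.of_forall fun y => Real.rpow_nonneg (Iy_nonneg d α _ y) _)
    ((Iy_meas d α _).pow_const _).aestronglyMeasurable]
  rfl

lemma Iy_lower_main (hα : 0 < α) {T : ℝ} (hT : 4 ≤ T) (y : Esp d) :
    min 1 (2 ^ (1 - α)) * 2 ^ (-(d:ℝ) - 1) * T ^ (α - (d:ℝ)) * rexp (-‖y‖ ^ 2 / (2 + T))
      ≤ Iy d α T y := by
  have hT0 : (0:ℝ) < T := by linarith
  have hu0 : (0:ℝ) ≤ ‖y‖ ^ 2 := sq_nonneg _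
  set c : ℝ := min 1 (2 ^ (1 - α)) * T ^ (α - 1) * (2*T) ^ (-(d:ℝ))
    * rexp (-‖y‖ ^ 2 / (2 + T)) with hc
  have hstep : ∀ s ∈ Ioc (T/2) T, c ≤ kk d α y s := by
    intro s hs
    have hs0 : (0:ℝ) < s := by have := hs.1; linarith
    have hsle : s ≤ T := hs.2
    have hsge : T/2 < s := hs.1
    have hA : min 1 (2 ^ (1-α)) * T ^ (α-1) ≤ s ^ (α-1) := by
      rcases le_or_gt 1 α with h | h
      · have e1 : (T/2:ℝ) ^ (α-1) = T ^ (α-1) * 2 ^ (1-α) := by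
          rw [Real.div_rpow hT0.le (by norm_num : (0:ℝ) ≤ 2), div_eq_mul_inv,
            ← Real.rpow_neg (by norm_num : (0:ℝ) ≤ 2), neg_sub]
        have e2 : (T/2) ^ (α-1) ≤ s ^ (α-1) :=
          Real.rpow_le_rpow (by linarith) hsge.le (by linarith)
        calc min 1 (2 ^ (1-α)) * T ^ (α-1) ≤ 2 ^ (1-α) * T ^ (α-1) :=
              mul_le_mul_of_nonneg_right (min_le_right _ _) (Real.rpow_nonneg hT0.le _)
          _ = (T/2) ^ (α-1) := by rw [e1]; ring
          _ ≤ s ^ (α-1) := e2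
      · calc min 1 (2 ^ (1-α)) * T ^ (α-1) ≤ 1 * T ^ (α-1) :=
              mul_le_mul_of_nonneg_right (min_le_left _ _) (Real.rpow_nonneg hT0.le _)
          _ = T ^ (α-1) := one_mul _
          _ ≤ s ^ (α-1) := Real.rpow_le_rpow_of_nonpos hs0 hsle (by linarith)
    have hB : (2*T) ^ (-(d:ℝ)) ≤ (1+s) ^ (-(d:ℝ)) :=
      Real.rpow_le_rpow_of_nonpos (by linarith) (by linarith)
        (neg_nonpos.mpr (Nat.cast_nonneg d))
    have hC : rexp (-‖y‖ ^ 2 / (2 + T)) ≤ rexp (-‖y‖ ^ 2 / (2 * (1 + s))) := by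
      rw [Real.exp_le_exp, neg_div, neg_div, neg_le_neg_iff]
      exact div_le_div_of_nonneg_left hu0 (by linarith) (by linarith)
    have h1 : (0:ℝ) ≤ min 1 (2 ^ (1-α)) * T ^ (α-1) := by positivity
    have h2 : (0:ℝ) ≤ (2*T) ^ (-(d:ℝ)) := Real.rpow_nonneg (by linarith) _
    have h3 : (0:ℝ) ≤ s ^ (α-1) := Real.rpow_nonneg hs0.le _
    have h4 : (0:ℝ) ≤ (1+s) ^ (-(d:ℝ)) := Real.rpow_nonneg (by linarith) _
    rw [hc]
    unfold kk
    have hAB : min 1 (2 ^ (1-α)) * T ^ (α-1) * (2*T) ^ (-(d:ℝ))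
        ≤ s ^ (α-1) * (1+s) ^ (-(d:ℝ)) := mul_le_mul hA hB h2 h3
    exact mul_le_mul hAB hC (Real.exp_pos _).le (mul_nonneg h3 h4)
  have hmono : ∫ s in Ioc (T/2) T, kk d α y s ≤ Iy d α T y := by
    refine setIntegral_mono_set (kk_intOn hα y hT0) ?_ ?_
    · filter_upwards [ae_restrict_mem measurableSet_Ioc] with s hs
      exact kk_nonneg y hs.1.le
    · exact HasSubset.Subset.eventuallyLE (Ioc_subset_Ioc (by linarith) le_rfl)
  have hconst : (T/2) * c ≤ ∫ s in Ioc (T/2) T, kk d α y s := by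
    have hint : IntegrableOn (kk d α y) (Ioc (T/2) T) :=
      (kk_intOn hα y hT0).mono_set (Ioc_subset_Ioc (by linarith) le_rfl)
    have h := setIntegral_mono_on (integrableOn_const (by
      rw [Real.volume_Ioc]; exact ENNReal.ofReal_ne_top)) hint measurableSet_Ioc hstep
    rwa [setIntegral_const, Real.volume_real_Ioc_of_le (by linarith : T/2 ≤ T), smul_eq_mul,
      show T - T/2 = T/2 by ring] at h
  have halg : min 1 (2 ^ (1 - α)) * 2 ^ (-(d:ℝ) - 1) * T ^ (α - (d:ℝ))
      * rexp (-‖y‖ ^ 2 / (2 + T)) = (T/2) * c := by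
    rw [hc, Real.mul_rpow (by norm_num : (0:ℝ) ≤ 2) hT0.le,
      show (-(d:ℝ) - 1) = (-(d:ℝ)) + (-1) by ring, Real.rpow_add two_pos,
      show (α - (d:ℝ)) = (α-1) + (-(d:ℝ)) + 1 by ring, Real.rpow_add hT0,
      Real.rpow_add hT0, Real.rpow_one, Real.rpow_neg_one]
    field_simp
  linarith

lemma Iy_lower_small (hα : 0 < α) {T : ℝ} (hT : 4 ≤ T) (y : Esp d)
    (hu : ‖y‖ ^ 2 ≤ T/2) :
    min 1 (2 ^ (α-1)) * 3 ^ (-(d:ℝ)) * rexp (-(1:ℝ)/2) * min 1 (2 ^ ((d:ℝ)-α))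
      * (1 + ‖y‖ ^ 2) ^ (α - (d:ℝ)) ≤ Iy d α T y := by
  have hT0 : (0:ℝ) < T := by linarith
  have hu0 : (0:ℝ) ≤ ‖y‖ ^ 2 := sq_nonneg _
  set u := ‖y‖ ^ 2 with hudef
  set m : ℝ := max u 1 with hm
  have hm1 : (1:ℝ) ≤ m := le_max_right _ _
  have hm0 : (0:ℝ) < m := by linarith
  have hum : u ≤ m := le_max_left _ _
  have h2m : 2*m ≤ T := by
    have : m ≤ T/2 := max_le hu (by linarith)
    linarith
  have hmu : m ≤ 1 + u := max_le (by linarith) (by linarith)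
  have hmu2 : (1 + u)/2 ≤ m := by
    rcases le_or_gt u 1 with h | h
    · have : m = max u 1 := hm
      have h1 : (1:ℝ) ≤ m := hm1
      linarith
    · have h1 : u ≤ m := hum
      linarith
  set c : ℝ := min 1 (2 ^ (α-1)) * m ^ (α-1) * (3*m) ^ (-(d:ℝ)) * rexp (-(1:ℝ)/2) with hc
  have hstep : ∀ s ∈ Ioc m (2*m), c ≤ kk d α y s := by
    intro s hs
    have hs0 : (0:ℝ) < s := lt_trans hm0 hs.1
    have hA : min 1 (2 ^ (α-1)) * m ^ (α-1) ≤ s ^ (α-1) := by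
      rcases le_or_gt 1 α with h | h
      · calc min 1 (2 ^ (α-1)) * m ^ (α-1) ≤ 1 * m ^ (α-1) :=
              mul_le_mul_of_nonneg_right (min_le_left _ _) (Real.rpow_nonneg hm0.le _)
          _ = m ^ (α-1) := one_mul _
          _ ≤ s ^ (α-1) := Real.rpow_le_rpow hm0.le hs.1.le (by linarith)
      · have e1 : ((2*m:ℝ)) ^ (α-1) = 2 ^ (α-1) * m ^ (α-1) :=
          Real.mul_rpow (by norm_num) hm0.le
        calc min 1 (2 ^ (α-1)) * m ^ (α-1) ≤ 2 ^ (α-1) * m ^ (α-1) :=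
              mul_le_mul_of_nonneg_right (min_le_right _ _) (Real.rpow_nonneg hm0.le _)
          _ = (2*m) ^ (α-1) := e1.symm
          _ ≤ s ^ (α-1) := Real.rpow_le_rpow_of_nonpos hs0 hs.2 (by linarith)
    have hB : (3*m) ^ (-(d:ℝ)) ≤ (1+s) ^ (-(d:ℝ)) := by
      refine Real.rpow_le_rpow_of_nonpos (by linarith) ?_ (neg_nonpos.mpr (Nat.cast_nonneg d))
      have := hs.2
      linarith
    have hC : rexp (-(1:ℝ)/2) ≤ rexp (-u / (2 * (1 + s))) := by
      rw [Real.exp_le_exp, neg_div, neg_div, neg_le_neg_iff]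
      rw [div_le_div_iff₀ (by linarith) (by norm_num)]
      have h1 : u ≤ 1 + s := by have := hs.1; linarith
      linarith
    have h3 : (0:ℝ) ≤ s ^ (α-1) := Real.rpow_nonneg hs0.le _
    have h4 : (0:ℝ) ≤ (1+s) ^ (-(d:ℝ)) := Real.rpow_nonneg (by linarith) _
    rw [hc]
    unfold kk
    have hAB : min 1 (2 ^ (α-1)) * m ^ (α-1) * (3*m) ^ (-(d:ℝ))
        ≤ s ^ (α-1) * (1+s) ^ (-(d:ℝ)) :=
      mul_le_mul hA hB (Real.rpow_nonneg (by linarith) _) h3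
    exact mul_le_mul hAB hC (Real.exp_pos _).le (mul_nonneg h3 h4)
  have hmono : ∫ s in Ioc m (2*m), kk d α y s ≤ Iy d α T y := by
    refine setIntegral_mono_set (kk_intOn hα y hT0) ?_ ?_
    · filter_upwards [ae_restrict_mem measurableSet_Ioc] with s hs
      exact kk_nonneg y hs.1.le
    · exact HasSubset.Subset.eventuallyLE (Ioc_subset_Ioc (by linarith) (by linarith))
  have hconst : m * c ≤ ∫ s in Ioc m (2*m), kk d α y s := by
    have hint : IntegrableOn (kk d α y) (Ioc m (2*m)) :=
      (kk_intOn hα y hT0).mono_set (Ioc_subset_Ioc (by linarith) (by linarith))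
    have h := setIntegral_mono_on (integrableOn_const (by
      rw [Real.volume_Ioc]; exact ENNReal.ofReal_ne_top)) hint measurableSet_Ioc hstep
    rwa [setIntegral_const, Real.volume_real_Ioc_of_le (by linarith : m ≤ 2*m), smul_eq_mul,
      show 2*m - m = m by ring] at h
  have hmc : min 1 (2 ^ (α-1)) * 3 ^ (-(d:ℝ)) * rexp (-(1:ℝ)/2) * m ^ (α-(d:ℝ)) = m * c := by
    rw [hc, Real.mul_rpow (by norm_num : (0:ℝ) ≤ 3) hm0.le,
      show (α - (d:ℝ)) = (α-1) + (-(d:ℝ)) + 1 by ring, Real.rpow_add hm0,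
      Real.rpow_add hm0, Real.rpow_one]
    ring
  have hfin : min 1 (2 ^ ((d:ℝ)-α)) * (1 + u) ^ (α - (d:ℝ)) ≤ m ^ (α-(d:ℝ)) := by
    rcases le_or_gt (d:ℝ) α with h | h
    · have e1 : ((1+u)/2:ℝ) ^ (α-(d:ℝ)) = (1+u) ^ (α-(d:ℝ)) * 2 ^ ((d:ℝ)-α) := by
        rw [Real.div_rpow (by linarith) (by norm_num : (0:ℝ) ≤ 2), div_eq_mul_inv,
          ← Real.rpow_neg (by norm_num : (0:ℝ) ≤ 2), neg_sub]
      calc min 1 (2 ^ ((d:ℝ)-α)) * (1 + u) ^ (α - (d:ℝ))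
          ≤ 2 ^ ((d:ℝ)-α) * (1 + u) ^ (α - (d:ℝ)) :=
            mul_le_mul_of_nonneg_right (min_le_right _ _) (Real.rpow_nonneg (by linarith) _)
        _ = ((1+u)/2) ^ (α-(d:ℝ)) := by rw [e1]; ring
        _ ≤ m ^ (α-(d:ℝ)) := Real.rpow_le_rpow (by linarith) hmu2 (by linarith)
    · calc min 1 (2 ^ ((d:ℝ)-α)) * (1 + u) ^ (α - (d:ℝ))
          ≤ 1 * (1 + u) ^ (α - (d:ℝ)) :=
            mul_le_mul_of_nonneg_right (min_le_left _ _) (Real.rpow_nonneg (by linarith) _)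
        _ = (1 + u) ^ (α - (d:ℝ)) := one_mul _
        _ ≤ m ^ (α-(d:ℝ)) := Real.rpow_le_rpow_of_nonpos hm0 hmu (by linarith)
  have hpos : (0:ℝ) ≤ min 1 (2 ^ (α-1)) * 3 ^ (-(d:ℝ)) * rexp (-(1:ℝ)/2) := by positivity
  calc min 1 (2 ^ (α-1)) * 3 ^ (-(d:ℝ)) * rexp (-(1:ℝ)/2) * min 1 (2 ^ ((d:ℝ)-α))
        * (1 + u) ^ (α - (d:ℝ))
      = min 1 (2 ^ (α-1)) * 3 ^ (-(d:ℝ)) * rexp (-(1:ℝ)/2)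
        * (min 1 (2 ^ ((d:ℝ)-α)) * (1 + u) ^ (α - (d:ℝ))) := by ring
    _ ≤ min 1 (2 ^ (α-1)) * 3 ^ (-(d:ℝ)) * rexp (-(1:ℝ)/2) * m ^ (α-(d:ℝ)) :=
        mul_le_mul_of_nonneg_left hfin hpos
    _ = m * c := hmc
    _ ≤ ∫ s in Ioc m (2*m), kk d α y s := hconst
    _ ≤ Iy d α T y := hmono

lemma NN_lower (hα : 0 < α) {θ : ℝ} (hθ : 0 ≤ θ) :
    ∃ c : ℝ, 0 < c ∧ ∀ T : ℝ, 4 ≤ T →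
      ENNReal.ofReal (c * T ^ (θ*(α - (d:ℝ)) + (d:ℝ)/2)) ≤ NN d α θ T := by
  set c1 : ℝ := min 1 (2 ^ (1 - α)) * 2 ^ (-(d:ℝ) - 1) * rexp (-1) with hc1def
  have hc1 : 0 < c1 := by positivity
  set vb := (volume (ball (0 : Esp d) 1)).toReal with hvbdef
  have hvb : 0 < vb := ENNReal.toReal_pos (measure_ball_pos volume 0 one_pos).ne'
    measure_ball_lt_top.ne
  refine ⟨c1 ^ θ * vb, by positivity, fun T hT => ?_⟩
  have hT0 : (0:ℝ) < T := by linarith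
  have hsqT : (0:ℝ) < Real.sqrt T := Real.sqrt_pos.mpr hT0
  have hpt : ∀ y : Esp d, y ∈ ball (0 : Esp d) (Real.sqrt T) →
      ENNReal.ofReal ((c1 * T ^ (α - (d:ℝ))) ^ θ) ≤ ENNReal.ofReal (Iy d α T y ^ θ) := by
    intro y hy
    apply ENNReal.ofReal_le_ofReal
    apply Real.rpow_le_rpow (by positivity) ?_ hθ
    have hu : ‖y‖ ^ 2 ≤ T := by
      rw [mem_ball_zero_iff] at hy
      nlinarith [Real.sq_sqrt hT0.le, norm_nonneg y]
    have h1 := Iy_lower_main hα hT y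
    have h2 : rexp (-1) ≤ rexp (-‖y‖ ^ 2 / (2 + T)) := by
      rw [Real.exp_le_exp, neg_div]
      have hd1 : ‖y‖ ^ 2 / (2 + T) ≤ 1 := by
        rw [div_le_one (by linarith)]
        linarith
      linarith
    calc c1 * T ^ (α - (d:ℝ))
        = min 1 (2 ^ (1 - α)) * 2 ^ (-(d:ℝ) - 1) * T ^ (α - (d:ℝ)) * rexp (-1) := by
          rw [hc1def]; ring
      _ ≤ min 1 (2 ^ (1 - α)) * 2 ^ (-(d:ℝ) - 1) * T ^ (α - (d:ℝ))
            * rexp (-‖y‖ ^ 2 / (2 + T)) := by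
          apply mul_le_mul_of_nonneg_left h2
          positivity
      _ ≤ Iy d α T y := h1
  have hsq : (Real.sqrt T) ^ (d:ℕ) = T ^ ((d:ℝ)/2) := by
    rw [← Real.rpow_natCast (Real.sqrt T) d, Real.rpow_def_of_pos hsqT,
      Real.log_sqrt hT0.le, Real.rpow_def_of_pos hT0]
    congr 1
    ring
  have hballvol : volume (ball (0 : Esp d) (Real.sqrt T))
      = ENNReal.ofReal (T ^ ((d:ℝ)/2)) * volume (ball (0 : Esp d) 1) := by
    rw [Measure.addHaar_ball_of_pos volume (0 : Esp d) hsqT]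
    congr 2
    rw [finrank_euclideanSpace_fin, hsq]
  calc ENNReal.ofReal (c1 ^ θ * vb * T ^ (θ*(α - (d:ℝ)) + (d:ℝ)/2))
      = volume (ball (0 : Esp d) (Real.sqrt T)) * ENNReal.ofReal ((c1 * T ^ (α - (d:ℝ))) ^ θ) := by
        rw [hballvol, hvbdef, ← ENNReal.ofReal_toReal (measure_ball_lt_top (x := (0:Esp d)) (r := (1:ℝ))).ne,
          ← ENNReal.ofReal_mul (by positivity), ← ENNReal.ofReal_mul (by positivity)]
        congr 1
        rw [Real.mul_rpow hc1.le (Real.rpow_nonneg hT0.le _), ← Real.rpow_mul hT0.le,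
          show (α - (d:ℝ)) * θ = θ * (α - (d:ℝ)) by ring,
          show θ*(α - (d:ℝ)) + (d:ℝ)/2 = (d:ℝ)/2 + θ*(α - (d:ℝ)) by ring,
          Real.rpow_add hT0]
        rw [ENNReal.toReal_ofReal hvb.le]
        ring
    _ = ∫⁻ _ in ball (0 : Esp d) (Real.sqrt T), ENNReal.ofReal ((c1 * T ^ (α - (d:ℝ))) ^ θ) := by
        rw [setLIntegral_const, mul_comm]
    _ ≤ ∫⁻ y in ball (0 : Esp d) (Real.sqrt T), ENNReal.ofReal (Iy d α T y ^ θ) := by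
        refine lintegral_mono_ae ?_
        filter_upwards [ae_restrict_mem measurableSet_ball] with y hy
        exact hpt y hy
    _ ≤ NN d α θ T := setLIntegral_le_lintegral _ _

lemma lint_w_le (hα : 0 < α) {δ β T : ℝ} (hδ : 0 ≤ δ) (hβ : 0 < β)
    (htop : α - δ ≤ β) (hT : 1 ≤ T) :
    ∫⁻ s in Ioc (0:ℝ) T, ENNReal.ofReal (s ^ (α-1) * (1+s) ^ (-δ))
      ≤ ENNReal.ofReal ((1/α + 1/β) * T ^ β) := by
  rw [← ofReal_integral_eq_lintegral_ofReal
    (integrableOn_rpow_mul (a := α - 1) (-δ) (by linarith) (by linarith))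
    (by filter_upwards [ae_restrict_mem measurableSet_Ioc] with s hs
        have hs0 : (0:ℝ) < s := hs.1
        have : (0:ℝ) ≤ 1 + s := by linarith
        positivity)]
  exact ENNReal.ofReal_le_ofReal (integral_aux_le hα hδ hβ htop hT)

lemma NN_upper_big (hαd : (d:ℝ) < α) {θ : ℝ} (hθ : 0 < θ) :
    ∃ C : ℝ, 0 < C ∧ ∀ T : ℝ, 4 ≤ T →
      NN d α θ T ≤ ENNReal.ofReal (C * T ^ (θ*(α - (d:ℝ)) + (d:ℝ)/2)) := by
  have hα : 0 < α := lt_of_le_of_lt (Nat.cast_nonneg d) hαd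
  have hsub : (0:ℝ) < α - (d:ℝ) := sub_pos.mpr hαd
  set CA : ℝ := 1/α + 1/(α - (d:ℝ)) with hCAdef
  have hCA0 : 0 < CA := by positivity
  have hCK := CK_pos 0
  set Cfin : ℝ := CA ^ θ * CK 0 * (8*π/θ) ^ ((d:ℝ)/2) with hCdef
  have hπ := Real.pi_pos
  refine ⟨Cfin, by positivity, fun T hT => ?_⟩
  have hT0 : (0:ℝ) < T := by linarith
  have hIy : ∀ y : Esp d, Iy d α T y
      ≤ CA * T ^ (α-(d:ℝ)) * rexp (-(1/(2*(1+T)) * ‖y‖ ^ 2)) := by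
    intro y
    have hptw : ∀ s ∈ Ioc (0:ℝ) T, kk d α y s
        ≤ (s ^ (α-1) * (1+s) ^ (-(d:ℝ))) * rexp (-(1/(2*(1+T)) * ‖y‖ ^ 2)) := by
      intro s hs
      have hs0 : (0:ℝ) < s := hs.1
      have hexp : rexp (-‖y‖ ^ 2 / (2*(1+s))) ≤ rexp (-(1/(2*(1+T)) * ‖y‖ ^ 2)) := by
        rw [Real.exp_le_exp, show -(1/(2*(1+T)) * ‖y‖ ^ 2) = -‖y‖ ^ 2/(2*(1+T)) by ring,
          neg_div, neg_div, neg_le_neg_iff]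
        exact div_le_div_of_nonneg_left (sq_nonneg _) (by linarith) (by linarith [hs.2])
      have hA0 : (0:ℝ) ≤ s ^ (α-1) * (1+s) ^ (-(d:ℝ)) :=
        mul_nonneg (Real.rpow_nonneg hs0.le _) (Real.rpow_nonneg (by linarith) _)
      exact mul_le_mul_of_nonneg_left hexp hA0
    have hint2 : IntegrableOn
        (fun s => (s ^ (α-1) * (1+s) ^ (-(d:ℝ))) * rexp (-(1/(2*(1+T)) * ‖y‖ ^ 2)))
        (Ioc 0 T) :=
      (integrableOn_rpow_mul (a := α - 1) (-(d:ℝ)) (by linarith) hT0).mul_const _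
    calc Iy d α T y
        ≤ ∫ s in Ioc (0:ℝ) T, (s ^ (α-1) * (1+s) ^ (-(d:ℝ)))
            * rexp (-(1/(2*(1+T)) * ‖y‖ ^ 2)) :=
          setIntegral_mono_on (kk_intOn hα y hT0) hint2 measurableSet_Ioc hptw
      _ = (∫ s in Ioc (0:ℝ) T, s ^ (α-1) * (1+s) ^ (-(d:ℝ)))
            * rexp (-(1/(2*(1+T)) * ‖y‖ ^ 2)) := integral_mul_const _ _
      _ ≤ CA * T ^ (α-(d:ℝ)) * rexp (-(1/(2*(1+T)) * ‖y‖ ^ 2)) := by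
          apply mul_le_mul_of_nonneg_right ?_ (Real.exp_pos _).le
          exact integral_aux_le hα (Nat.cast_nonneg d) hsub le_rfl (by linarith)
  have hb : (0:ℝ) < θ/(2*(1+T)) := by positivity
  have hpt2 : ∀ y : Esp d, ENNReal.ofReal (Iy d α T y ^ θ)
      ≤ ENNReal.ofReal ((CA * T ^ (α-(d:ℝ))) ^ θ
          * ((1+‖y‖ ^ 2) ^ (0:ℝ) * rexp (-(θ/(2*(1+T)) * ‖y‖ ^ 2)))) := by
    intro y
    apply ENNReal.ofReal_le_ofReal
    rw [Real.rpow_zero, one_mul]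
    have h1 : Iy d α T y ^ θ
        ≤ (CA * T ^ (α-(d:ℝ)) * rexp (-(1/(2*(1+T)) * ‖y‖ ^ 2))) ^ θ :=
      Real.rpow_le_rpow (Iy_nonneg d α T y) (hIy y) hθ.le
    calc Iy d α T y ^ θ ≤ _ := h1
      _ = (CA * T ^ (α-(d:ℝ))) ^ θ * rexp (-(θ/(2*(1+T)) * ‖y‖ ^ 2)) := by
          rw [Real.mul_rpow (by positivity) (Real.exp_pos _).le, ← Real.exp_mul]
          congr 1
          ring
  calc NN d α θ T
      ≤ ∫⁻ y : Esp d, ENNReal.ofReal ((CA * T ^ (α-(d:ℝ))) ^ θ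
          * ((1+‖y‖ ^ 2) ^ (0:ℝ) * rexp (-(θ/(2*(1+T)) * ‖y‖ ^ 2)))) := lintegral_mono hpt2
    _ = ENNReal.ofReal ((CA * T ^ (α-(d:ℝ))) ^ θ)
          * ∫⁻ y : Esp d, ENNReal.ofReal ((1+‖y‖ ^ 2) ^ (0:ℝ)
              * rexp (-(θ/(2*(1+T)) * ‖y‖ ^ 2))) := by
        simp_rw [ENNReal.ofReal_mul (by positivity : (0:ℝ) ≤ (CA * T ^ (α-(d:ℝ))) ^ θ)]
        exact lintegral_const_mul' _ _ ENNReal.ofReal_ne_top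
    _ ≤ ENNReal.ofReal ((CA * T ^ (α-(d:ℝ))) ^ θ)
          * ENNReal.ofReal ((1 + 1/(θ/(2*(1+T)))) ^ (0:ℝ) * CK 0
              * (π/((θ/(2*(1+T)))/2)) ^ ((d:ℝ)/2)) :=
        mul_le_mul_right (lintegral_y_aux d le_rfl hb) _
    _ ≤ ENNReal.ofReal (Cfin * T ^ (θ*(α - (d:ℝ)) + (d:ℝ)/2)) := by
        rw [← ENNReal.ofReal_mul (by positivity)]
        apply ENNReal.ofReal_le_ofReal
        rw [Real.rpow_zero, one_mul]
        have e1 : π/((θ/(2*(1+T)))/2) = (4*π/θ) * (1+T) := by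
          field_simp
          ring
        have e2 : (π/((θ/(2*(1+T)))/2)) ^ ((d:ℝ)/2) ≤ (8*π/θ) ^ ((d:ℝ)/2) * T ^ ((d:ℝ)/2) := by
          rw [e1, ← Real.mul_rpow (by positivity) hT0.le]
          apply Real.rpow_le_rpow (by positivity) ?_ (by positivity)
          have : (8*π/θ) * T = (4*π/θ) * (2*T) := by ring
          rw [this]
          apply mul_le_mul_of_nonneg_left (by linarith) (by positivity)
        have e3 : (CA * T ^ (α-(d:ℝ))) ^ θ = CA ^ θ * T ^ (θ*(α-(d:ℝ))) := by
          rw [Real.mul_rpow hCA0.le (Real.rpow_nonneg hT0.le _), ← Real.rpow_mul hT0.le,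
            show (α-(d:ℝ)) * θ = θ*(α-(d:ℝ)) by ring]
        calc (CA * T ^ (α-(d:ℝ))) ^ θ * (CK 0 * (π/((θ/(2*(1+T)))/2)) ^ ((d:ℝ)/2))
            ≤ (CA ^ θ * T ^ (θ*(α-(d:ℝ)))) * (CK 0 * ((8*π/θ) ^ ((d:ℝ)/2) * T ^ ((d:ℝ)/2))) := by
              rw [← e3]
              apply mul_le_mul_of_nonneg_left ?_ (by positivity)
              exact mul_le_mul_of_nonneg_left e2 hCK.le
          _ = Cfin * (T ^ (θ*(α-(d:ℝ))) * T ^ ((d:ℝ)/2)) := by rw [hCdef]; ring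
          _ = Cfin * T ^ (θ*(α - (d:ℝ)) + (d:ℝ)/2) := by rw [← Real.rpow_add hT0]

lemma NN_upper_holder (hα : 0 < α) {θ : ℝ} (hθ : 1 ≤ θ)
    (hγ : 0 < α - ((d:ℝ) - (d:ℝ)/(2*θ))) :
    ∃ C : ℝ, 0 < C ∧ ∀ T : ℝ, 4 ≤ T →
      NN d α θ T ≤ ENNReal.ofReal (C * T ^ (θ*(α - (d:ℝ)) + (d:ℝ)/2)) := by
  have hθ0 : (0:ℝ) < θ := by linarith
  set δ1 : ℝ := (d:ℝ) - (d:ℝ)/(2*θ) with hδ1def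
  have hδ1 : 0 ≤ δ1 := by
    rw [hδ1def, sub_nonneg]
    exact div_le_self (Nat.cast_nonneg d) (by linarith)
  set γ : ℝ := α - δ1 with hγdef
  have hγ0 : 0 < γ := hγ
  set CA : ℝ := 1/α + 1/γ with hCAdef
  have hCA0 : 0 < CA := by positivity
  have hCK := CK_pos 0
  have hπ := Real.pi_pos
  set Cc : ℝ := CK 0 * (4*π/θ) ^ ((d:ℝ)/2) with hCcdef
  have hCc0 : 0 < Cc := by positivity
  refine ⟨Cc * CA * CA ^ (θ-1), by positivity, fun T hT => ?_⟩
  have hT0 : (0:ℝ) < T := by linarith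
  set w : ℝ → ℝ := fun s => s ^ (α-1) * (1+s) ^ (-δ1) with hwdef
  set μ := volume.restrict (Ioc (0:ℝ) T) with hμdef
  have hwpos : ∀ s ∈ Ioc (0:ℝ) T, 0 < w s := fun s hs =>
    mul_pos (Real.rpow_pos_of_pos hs.1 _) (Real.rpow_pos_of_pos (by linarith [hs.1]) _)
  have hwmeas : Measurable w :=
    (measurable_id.pow_const _).mul ((measurable_const.add measurable_id).pow_const _)
  have hW_int : (∫⁻ s, ENNReal.ofReal (w s) ∂μ) ≤ ENNReal.ofReal (CA * T ^ γ) := by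
    rw [hμdef]
    exact lint_w_le hα hδ1 hγ0 (le_of_eq hγdef.symm) (by linarith)
  have hWne : (∫⁻ s, ENNReal.ofReal (w s) ∂μ) ^ (θ-1) ≠ ⊤ :=
    ENNReal.rpow_ne_top_of_nonneg (by linarith)
      (lt_of_le_of_lt hW_int ENNReal.ofReal_lt_top).ne
  have hkey : ∀ y : Esp d, ENNReal.ofReal (Iy d α T y ^ θ)
      ≤ (∫⁻ s, ENNReal.ofReal (kk d α y s) ^ θ * ENNReal.ofReal (w s) ^ (1-θ) ∂μ)
        * (∫⁻ s, ENNReal.ofReal (w s) ∂μ) ^ (θ-1) := by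
    intro y
    rw [← ENNReal.ofReal_rpow_of_nonneg (Iy_nonneg d α T y) hθ0.le]
    have hIyeq : ENNReal.ofReal (Iy d α T y) = ∫⁻ s, ENNReal.ofReal (kk d α y s) ∂μ := by
      rw [hμdef]; exact ofReal_Iy hα hT0 y
    rw [hIyeq]
    refine holder_pow ((ENNReal.measurable_ofReal.comp (kk_meas y)).aemeasurable)
      ((ENNReal.measurable_ofReal.comp hwmeas).aemeasurable) ?_ hθ
    rw [hμdef]
    filter_upwards [ae_restrict_mem measurableSet_Ioc] with s hs
    exact ⟨(ENNReal.ofReal_pos.mpr (hwpos s hs)).ne', ENNReal.ofReal_ne_top⟩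
  have hjoint : Measurable (fun z : Esp d × ℝ => ENNReal.ofReal (kk d α z.1 z.2) ^ θ
      * ENNReal.ofReal (w z.2) ^ (1-θ)) :=
    ((ENNReal.measurable_ofReal.comp (kk_meas_prod d α)).pow_const θ).mul
      ((ENNReal.measurable_ofReal.comp (hwmeas.comp measurable_snd)).pow_const (1-θ))
  have hinner : ∀ᵐ s ∂μ, (∫⁻ y : Esp d, ENNReal.ofReal (kk d α y s) ^ θ
      * ENNReal.ofReal (w s) ^ (1-θ)) ≤ ENNReal.ofReal (Cc * w s) := by
    rw [hμdef]
    filter_upwards [ae_restrict_mem measurableSet_Ioc] with s hs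
    have hs0 : (0:ℝ) < s := hs.1
    have h1s : (0:ℝ) < 1 + s := by linarith
    have hws : 0 < w s := hwpos s hs
    set b : ℝ := θ/(2*(1+s)) with hbdef
    have hb : 0 < b := by positivity
    have hA0 : (0:ℝ) ≤ s ^ (α-1) * (1+s) ^ (-(d:ℝ)) :=
      mul_nonneg (Real.rpow_nonneg hs0.le _) (Real.rpow_nonneg h1s.le _)
    have hptw : ∀ y : Esp d, ENNReal.ofReal (kk d α y s) ^ θ
        = ENNReal.ofReal ((s ^ (α-1) * (1+s) ^ (-(d:ℝ))) ^ θ)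
          * ENNReal.ofReal ((1+‖y‖ ^ 2) ^ (0:ℝ) * rexp (-(b * ‖y‖ ^ 2))) := by
      intro y
      rw [ENNReal.ofReal_rpow_of_nonneg (kk_nonneg y hs0.le) hθ0.le,
        ← ENNReal.ofReal_mul (by positivity)]
      congr 1
      rw [Real.rpow_zero, one_mul]
      show (s ^ (α-1) * (1+s) ^ (-(d:ℝ)) * rexp (-‖y‖ ^ 2 / (2*(1+s)))) ^ θ = _
      rw [Real.mul_rpow hA0 (Real.exp_pos _).le, ← Real.exp_mul]
      congr 1
      rw [hbdef]
      ring
    have hfin : ENNReal.ofReal (w s) ^ (1-θ) ≠ ⊤ := by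
      simp [ENNReal.rpow_eq_top_iff, (ENNReal.ofReal_pos.mpr hws).ne', ENNReal.ofReal_ne_top]
    have hAw : (s ^ (α-1) * (1+s) ^ (-(d:ℝ))) ^ θ * ((4*π/θ) ^ ((d:ℝ)/2)
        * (1+s) ^ ((d:ℝ)/2)) * (w s) ^ (1-θ) = (4*π/θ) ^ ((d:ℝ)/2) * w s := by
      rw [hwdef]
      show (s ^ (α-1) * (1+s) ^ (-(d:ℝ))) ^ θ * ((4*π/θ) ^ ((d:ℝ)/2)
        * (1+s) ^ ((d:ℝ)/2)) * (s ^ (α-1) * (1+s) ^ (-δ1)) ^ (1-θ)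
        = (4*π/θ) ^ ((d:ℝ)/2) * (s ^ (α-1) * (1+s) ^ (-δ1))
      rw [Real.mul_rpow (Real.rpow_nonneg hs0.le _) (Real.rpow_nonneg h1s.le _),
        Real.mul_rpow (Real.rpow_nonneg hs0.le _) (Real.rpow_nonneg h1s.le _),
        ← Real.rpow_mul hs0.le, ← Real.rpow_mul h1s.le,
        ← Real.rpow_mul hs0.le, ← Real.rpow_mul h1s.le]
      have e1 : s ^ ((α-1)*θ) * s ^ ((α-1)*(1-θ)) = s ^ (α-1) := by
        rw [← Real.rpow_add hs0]; congr 1; ring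
      have e2 : (1+s) ^ (-(d:ℝ)*θ) * ((1+s) ^ ((d:ℝ)/2) * (1+s) ^ (-δ1*(1-θ)))
          = (1+s) ^ (-δ1) := by
        rw [← Real.rpow_add h1s, ← Real.rpow_add h1s]
        congr 1
        rw [hδ1def]
        field_simp
        ring
      calc s ^ ((α-1)*θ) * (1+s) ^ (-(d:ℝ)*θ) * ((4*π/θ) ^ ((d:ℝ)/2) * (1+s) ^ ((d:ℝ)/2))
            * (s ^ ((α-1)*(1-θ)) * (1+s) ^ (-δ1*(1-θ)))
          = (4*π/θ) ^ ((d:ℝ)/2) * ((s ^ ((α-1)*θ) * s ^ ((α-1)*(1-θ)))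
            * ((1+s) ^ (-(d:ℝ)*θ) * ((1+s) ^ ((d:ℝ)/2) * (1+s) ^ (-δ1*(1-θ))))) := by ring
        _ = _ := by rw [e1, e2]
    have hgauss : π/(b/2) = (4*π/θ) * (1+s) := by
      rw [hbdef]; field_simp; ring
    calc (∫⁻ y : Esp d, ENNReal.ofReal (kk d α y s) ^ θ * ENNReal.ofReal (w s) ^ (1-θ))
        = (∫⁻ y : Esp d, ENNReal.ofReal (kk d α y s) ^ θ) * ENNReal.ofReal (w s) ^ (1-θ) :=
          lintegral_mul_const' _ _ hfin
      _ = (ENNReal.ofReal ((s ^ (α-1) * (1+s) ^ (-(d:ℝ))) ^ θ)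
            * ∫⁻ y : Esp d, ENNReal.ofReal ((1+‖y‖ ^ 2) ^ (0:ℝ) * rexp (-(b * ‖y‖ ^ 2))))
            * ENNReal.ofReal (w s) ^ (1-θ) := by
          rw [← lintegral_const_mul' _ _ ENNReal.ofReal_ne_top]
          congr 1
          apply lintegral_congr
          exact hptw
      _ ≤ (ENNReal.ofReal ((s ^ (α-1) * (1+s) ^ (-(d:ℝ))) ^ θ)
            * ENNReal.ofReal ((1 + 1/b) ^ (0:ℝ) * CK 0 * (π/(b/2)) ^ ((d:ℝ)/2)))
            * ENNReal.ofReal (w s) ^ (1-θ) := by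
          apply mul_le_mul_left
          exact mul_le_mul_right (lintegral_y_aux d le_rfl hb) _
      _ ≤ ENNReal.ofReal (Cc * w s) := by
          rw [ENNReal.ofReal_rpow_of_pos hws, ← ENNReal.ofReal_mul (by positivity),
            ← ENNReal.ofReal_mul (by positivity)]
          apply ENNReal.ofReal_le_ofReal
          rw [Real.rpow_zero, one_mul, hgauss,
            Real.mul_rpow (by positivity) h1s.le, hCcdef]
          apply le_of_eq
          calc (s ^ (α-1) * (1+s) ^ (-(d:ℝ))) ^ θ * (CK 0 * ((4*π/θ) ^ ((d:ℝ)/2)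
                * (1+s) ^ ((d:ℝ)/2))) * w s ^ (1-θ)
              = CK 0 * ((s ^ (α-1) * (1+s) ^ (-(d:ℝ))) ^ θ * ((4*π/θ) ^ ((d:ℝ)/2)
                * (1+s) ^ ((d:ℝ)/2)) * (w s) ^ (1-θ)) := by ring
            _ = CK 0 * ((4*π/θ) ^ ((d:ℝ)/2) * w s) := by rw [hAw]
            _ = CK 0 * (4*π/θ) ^ ((d:ℝ)/2) * w s := by ring
  calc NN d α θ T
      ≤ ∫⁻ y : Esp d, (∫⁻ s, ENNReal.ofReal (kk d α y s) ^ θ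
          * ENNReal.ofReal (w s) ^ (1-θ) ∂μ)
          * (∫⁻ s, ENNReal.ofReal (w s) ∂μ) ^ (θ-1) := lintegral_mono hkey
    _ = (∫⁻ y : Esp d, ∫⁻ s, ENNReal.ofReal (kk d α y s) ^ θ
          * ENNReal.ofReal (w s) ^ (1-θ) ∂μ)
          * (∫⁻ s, ENNReal.ofReal (w s) ∂μ) ^ (θ-1) := lintegral_mul_const' _ _ hWne
    _ = (∫⁻ s, (∫⁻ y : Esp d, ENNReal.ofReal (kk d α y s) ^ θ
          * ENNReal.ofReal (w s) ^ (1-θ)) ∂μ)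
          * (∫⁻ s, ENNReal.ofReal (w s) ∂μ) ^ (θ-1) := by
        rw [lintegral_lintegral_swap hjoint.aemeasurable]
    _ ≤ (∫⁻ s, ENNReal.ofReal (Cc * w s) ∂μ)
          * (∫⁻ s, ENNReal.ofReal (w s) ∂μ) ^ (θ-1) :=
        mul_le_mul_left (lintegral_mono_ae hinner) _
    _ ≤ ENNReal.ofReal (Cc * (CA * T ^ γ)) * ENNReal.ofReal ((CA * T ^ γ) ^ (θ-1)) := by
        apply mul_le_mul'
        · calc ∫⁻ s, ENNReal.ofReal (Cc * w s) ∂μ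
              = ENNReal.ofReal Cc * ∫⁻ s, ENNReal.ofReal (w s) ∂μ := by
                simp_rw [ENNReal.ofReal_mul hCc0.le]
                exact lintegral_const_mul' _ _ ENNReal.ofReal_ne_top
            _ ≤ ENNReal.ofReal Cc * ENNReal.ofReal (CA * T ^ γ) :=
                mul_le_mul_right hW_int _
            _ = ENNReal.ofReal (Cc * (CA * T ^ γ)) := by
                rw [← ENNReal.ofReal_mul hCc0.le]
        · rw [← ENNReal.ofReal_rpow_of_nonneg (by positivity) (by linarith : (0:ℝ) ≤ θ-1)]
          exact ENNReal.rpow_le_rpow hW_int (by linarith)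
    _ ≤ ENNReal.ofReal (Cc * CA * CA ^ (θ-1) * T ^ (θ*(α - (d:ℝ)) + (d:ℝ)/2)) := by
        rw [← ENNReal.ofReal_mul (by positivity)]
        apply ENNReal.ofReal_le_ofReal
        apply le_of_eq
        have e3 : (CA * T ^ γ) ^ (θ-1) = CA ^ (θ-1) * T ^ (γ*(θ-1)) := by
          rw [Real.mul_rpow hCA0.le (Real.rpow_nonneg hT0.le _), ← Real.rpow_mul hT0.le]
        have e4 : T ^ γ * T ^ (γ*(θ-1)) = T ^ (θ*(α - (d:ℝ)) + (d:ℝ)/2) := by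
          rw [← Real.rpow_add hT0]
          congr 1
          rw [hγdef, hδ1def]
          field_simp
          ring
        calc Cc * (CA * T ^ γ) * (CA * T ^ γ) ^ (θ-1)
            = Cc * CA * CA ^ (θ-1) * (T ^ γ * T ^ (γ*(θ-1))) := by rw [e3]; ring
          _ = Cc * CA * CA ^ (θ-1) * T ^ (θ*(α - (d:ℝ)) + (d:ℝ)/2) := by rw [e4]

set_option maxHeartbeats 2000000 in
lemma NN_upper_small {θ : ℝ} (hθl : 1/2 < θ) (hθu : θ < 1) (hαd : α ≤ (d:ℝ))
    (hγ : 0 < α - ((d:ℝ) - (d:ℝ)/(2*θ))) :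
    ∃ C : ℝ, 0 < C ∧ ∀ T : ℝ, 4 ≤ T →
      NN d α θ T ≤ ENNReal.ofReal (C * T ^ (θ*(α - (d:ℝ)) + (d:ℝ)/2)) := by
  have hθ0 : (0:ℝ) < θ := by linarith
  have hδ1 : (0:ℝ) ≤ (d:ℝ) - (d:ℝ)/(2*θ) := by
    rw [sub_nonneg]
    exact div_le_self (Nat.cast_nonneg d) (by linarith)
  have hα : 0 < α := lt_of_le_of_lt hδ1 (sub_pos.mp hγ)
  set κ : ℝ := ((d:ℝ) - α) * (1-θ) with hκdef
  have hκ0 : 0 ≤ κ := mul_nonneg (by linarith) (by linarith)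
  have hκd2 : κ ≤ (d:ℝ)/2 := by
    have h1 : κ ≤ (d:ℝ) * (1-θ) :=
      mul_le_mul_of_nonneg_right (by linarith) (by linarith)
    nlinarith [Nat.cast_nonneg (α := ℝ) d]
  set E : ℝ := θ*(α - (d:ℝ)) + (d:ℝ)/2 with hEdef
  have hEeq : E = θ * (α - ((d:ℝ) - (d:ℝ)/(2*θ))) := by
    rw [hEdef]
    field_simp
    ring
  have hE : 0 < E := by
    rw [hEeq]
    exact mul_pos hθ0 hγ
  have htopE : α - ((d:ℝ)/2 - κ) = E := by
    rw [hκdef, hEdef]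
    ring
  set c1 : ℝ := min 1 (2 ^ (1-α)) * 2 ^ (-(d:ℝ)-1) with hc1def
  have hc1 : 0 < c1 := by positivity
  set c2 : ℝ := min 1 (2 ^ (α-1)) * 3 ^ (-(d:ℝ)) * rexp (-(1:ℝ)/2)
    * min 1 (2 ^ ((d:ℝ)-α)) with hc2def
  have hc2 : 0 < c2 := by positivity
  set cG : ℝ := min c2 (c1 * 2 ^ (α-(d:ℝ))) with hcGdef
  have hcG : 0 < cG := lt_min hc2 (by positivity)
  have hCKκ := CK_pos κ
  have hπ := Real.pi_pos
  have h2θ1 : (0:ℝ) < 2*θ - 1 := by linarith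
  set CA : ℝ := 1/α + 1/E with hCAdef
  have hCA0 : 0 < CA := by positivity
  set Cbig : ℝ := cG ^ (θ-1) * ((1+2/(2*θ-1)) ^ κ * CK κ * (4*π/(2*θ-1)) ^ ((d:ℝ)/2))
    with hCbigdef
  have hCbig : 0 < Cbig := by positivity
  refine ⟨Cbig * CA, by positivity, fun T hT => ?_⟩
  have hT0 : (0:ℝ) < T := by linarith
  set G : Esp d → ℝ := fun y => cG * (1 + min (‖y‖ ^ 2) T) ^ (α-(d:ℝ))
    * rexp (-‖y‖ ^ 2/(2+T)) with hGdef
  have hminpos : ∀ y : Esp d, (0:ℝ) < 1 + min (‖y‖ ^ 2) T := by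
    intro y
    have : (0:ℝ) ≤ min (‖y‖ ^ 2) T := le_min (sq_nonneg _) hT0.le
    linarith
  have hGpos : ∀ y : Esp d, 0 < G y := fun y =>
    mul_pos (mul_pos hcG (Real.rpow_pos_of_pos (hminpos y) _)) (Real.exp_pos _)
  have hGle : ∀ y : Esp d, G y ≤ Iy d α T y := by
    intro y
    rcases le_or_gt (‖y‖ ^ 2) (T/2) with h | h
    · have hmin : min (‖y‖ ^ 2) T = ‖y‖ ^ 2 := min_eq_left (by linarith)
      have hexple : rexp (-‖y‖ ^ 2/(2+T)) ≤ 1 := by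
        rw [Real.exp_le_one_iff, neg_div]
        apply neg_nonpos_of_nonneg
        positivity
      calc G y = cG * (1 + ‖y‖ ^ 2) ^ (α-(d:ℝ)) * rexp (-‖y‖ ^ 2/(2+T)) := by simp only [hGdef]; rw [hmin]
        _ ≤ cG * (1 + ‖y‖ ^ 2) ^ (α-(d:ℝ)) * 1 := by
            apply mul_le_mul_of_nonneg_left hexple
            positivity
        _ ≤ c2 * (1 + ‖y‖ ^ 2) ^ (α-(d:ℝ)) := by
            rw [mul_one]
            exact mul_le_mul_of_nonneg_right (min_le_left _ _) (Real.rpow_nonneg (by positivity) _)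
        _ = min 1 (2 ^ (α-1)) * 3 ^ (-(d:ℝ)) * rexp (-(1:ℝ)/2) * min 1 (2 ^ ((d:ℝ)-α))
              * (1 + ‖y‖ ^ 2) ^ (α-(d:ℝ)) := by rw [hc2def]
        _ ≤ Iy d α T y := Iy_lower_small hα hT y h
    · have h1 : T/2 ≤ min (‖y‖ ^ 2) T := le_min h.le (by linarith)
      have h2 : (1 + min (‖y‖ ^ 2) T) ^ (α-(d:ℝ)) ≤ 2 ^ ((d:ℝ)-α) * T ^ (α-(d:ℝ)) := by
        have e1 : ((T/2:ℝ)) ^ (α-(d:ℝ)) = T ^ (α-(d:ℝ)) * 2 ^ ((d:ℝ)-α) := by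
          rw [Real.div_rpow hT0.le (by norm_num : (0:ℝ) ≤ 2), div_eq_mul_inv,
            ← Real.rpow_neg (by norm_num : (0:ℝ) ≤ 2), neg_sub]
        calc (1 + min (‖y‖ ^ 2) T) ^ (α-(d:ℝ)) ≤ (T/2) ^ (α-(d:ℝ)) :=
              Real.rpow_le_rpow_of_nonpos (by linarith) (by linarith) (by linarith)
          _ = 2 ^ ((d:ℝ)-α) * T ^ (α-(d:ℝ)) := by rw [e1]; ring
      calc G y ≤ (c1 * 2 ^ (α-(d:ℝ))) * (1 + min (‖y‖ ^ 2) T) ^ (α-(d:ℝ))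
            * rexp (-‖y‖ ^ 2/(2+T)) := by
            apply mul_le_mul_of_nonneg_right ?_ (Real.exp_pos _).le
            exact mul_le_mul_of_nonneg_right (min_le_right _ _)
              (Real.rpow_nonneg (hminpos y).le _)
        _ ≤ (c1 * 2 ^ (α-(d:ℝ))) * (2 ^ ((d:ℝ)-α) * T ^ (α-(d:ℝ)))
            * rexp (-‖y‖ ^ 2/(2+T)) := by
            apply mul_le_mul_of_nonneg_right ?_ (Real.exp_pos _).le
            exact mul_le_mul_of_nonneg_left h2 (by positivity)
        _ = min 1 (2 ^ (1-α)) * 2 ^ (-(d:ℝ)-1) * T ^ (α-(d:ℝ)) * rexp (-‖y‖ ^ 2/(2+T)) := by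
            rw [hc1def]
            have e2 : (2:ℝ) ^ (α-(d:ℝ)) * 2 ^ ((d:ℝ)-α) = 1 := by
              rw [← Real.rpow_add two_pos]
              norm_num
            calc min 1 (2 ^ (1-α)) * 2 ^ (-(d:ℝ)-1) * 2 ^ (α-(d:ℝ))
                  * (2 ^ ((d:ℝ)-α) * T ^ (α-(d:ℝ))) * rexp (-‖y‖ ^ 2/(2+T))
                = min 1 (2 ^ (1-α)) * 2 ^ (-(d:ℝ)-1) * (2 ^ (α-(d:ℝ)) * 2 ^ ((d:ℝ)-α))
                  * T ^ (α-(d:ℝ)) * rexp (-‖y‖ ^ 2/(2+T)) := by ring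
              _ = min 1 (2 ^ (1-α)) * 2 ^ (-(d:ℝ)-1) * T ^ (α-(d:ℝ))
                  * rexp (-‖y‖ ^ 2/(2+T)) := by rw [e2]; ring
        _ ≤ Iy d α T y := Iy_lower_main hα hT y
  have hGmeas : Measurable G := by
    apply Measurable.mul
    · exact measurable_const.mul
        (((measurable_const.add ((measurable_norm.pow_const 2).min measurable_const)).pow_const _))
    · exact (((measurable_norm.pow_const 2).neg).div_const _).exp
  have hpt : ∀ y : Esp d, ENNReal.ofReal (Iy d α T y ^ θ)
      ≤ ENNReal.ofReal (Iy d α T y) * ENNReal.ofReal (G y ^ (θ-1)) := by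
    intro y
    have hIpos : 0 < Iy d α T y := lt_of_lt_of_le (hGpos y) (hGle y)
    have hsplit : Iy d α T y ^ θ = Iy d α T y * Iy d α T y ^ (θ-1) := by
      rw [show θ = 1 + (θ-1) by ring, Real.rpow_add hIpos, Real.rpow_one]
      ring_nf
    have hmono : Iy d α T y ^ (θ-1) ≤ G y ^ (θ-1) :=
      Real.rpow_le_rpow_of_nonpos (hGpos y) (hGle y) (by linarith)
    rw [← ENNReal.ofReal_mul hIpos.le]
    apply ENNReal.ofReal_le_ofReal
    rw [hsplit]
    exact mul_le_mul_of_nonneg_left hmono hIpos.le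
  set μ := volume.restrict (Ioc (0:ℝ) T) with hμdef
  have hjoint : Measurable (fun z : Esp d × ℝ => ENNReal.ofReal (kk d α z.1 z.2)
      * ENNReal.ofReal (G z.1 ^ (θ-1))) :=
    (ENNReal.measurable_ofReal.comp (kk_meas_prod d α)).mul
      (ENNReal.measurable_ofReal.comp ((hGmeas.pow_const (θ-1)).comp measurable_fst))
  have hinner : ∀ᵐ s ∂μ, (∫⁻ y : Esp d, ENNReal.ofReal (kk d α y s)
      * ENNReal.ofReal (G y ^ (θ-1)))
      ≤ ENNReal.ofReal (Cbig * (s ^ (α-1) * (1+s) ^ (-((d:ℝ)/2 - κ)))) := by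
    rw [hμdef]
    filter_upwards [ae_restrict_mem measurableSet_Ioc] with s hs
    have hs0 : (0:ℝ) < s := hs.1
    have h1s : (0:ℝ) < 1 + s := by linarith
    set b : ℝ := (2*θ-1)/(2*(1+s)) with hbdef
    have hb : 0 < b := by positivity
    have hA0 : (0:ℝ) ≤ s ^ (α-1) * (1+s) ^ (-(d:ℝ)) :=
      mul_nonneg (Real.rpow_nonneg hs0.le _) (Real.rpow_nonneg h1s.le _)
    -- pointwise bound in y
    have hstep1 : ∀ y : Esp d, kk d α y s * G y ^ (θ-1)
        ≤ (s ^ (α-1) * (1+s) ^ (-(d:ℝ))) * cG ^ (θ-1)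
          * ((1+‖y‖ ^ 2) ^ κ * rexp (-(b * ‖y‖ ^ 2))) := by
      intro y
      have hu0 : (0:ℝ) ≤ ‖y‖ ^ 2 := sq_nonneg _
      have hminy := hminpos y
      have hGpow : G y ^ (θ-1) = cG ^ (θ-1) * (1 + min (‖y‖ ^ 2) T) ^ (κ)
          * rexp (-‖y‖ ^ 2/(2+T) * (θ-1)) := by
        rw [hGdef]
        show (cG * (1 + min (‖y‖ ^ 2) T) ^ (α-(d:ℝ)) * rexp (-‖y‖ ^ 2/(2+T))) ^ (θ-1) = _
        rw [Real.mul_rpow (mul_nonneg hcG.le (Real.rpow_nonneg hminy.le _)) (Real.exp_pos _).le,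
          Real.mul_rpow hcG.le (Real.rpow_nonneg hminy.le _),
          ← Real.rpow_mul hminy.le, ← Real.exp_mul]
        congr 2
        rw [hκdef]
        ring
      have hminle : (1 + min (‖y‖ ^ 2) T) ^ (κ) ≤ (1 + ‖y‖ ^ 2) ^ κ :=
        Real.rpow_le_rpow hminy.le (by
          have : min (‖y‖ ^ 2) T ≤ ‖y‖ ^ 2 := min_le_left _ _
          linarith) hκ0
      have hexpb : rexp (-‖y‖ ^ 2 / (2*(1+s))) * rexp (-‖y‖ ^ 2/(2+T) * (θ-1))
          ≤ rexp (-(b * ‖y‖ ^ 2)) := by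
        rw [← Real.exp_add, Real.exp_le_exp]
        have hfrac : (1-θ)/(2+T) ≤ (1-θ)/(1+s) :=
          div_le_div_of_nonneg_left (by linarith) h1s (by linarith [hs.2])
        have hmul := mul_le_mul_of_nonneg_right hfrac hu0
        have heq1 : -‖y‖ ^ 2 / (2*(1+s)) + -‖y‖ ^ 2/(2+T) * (θ-1)
            = -‖y‖ ^ 2 / (2*(1+s)) + (1-θ)/(2+T) * ‖y‖ ^ 2 := by ring
        have heq2 : -(b * ‖y‖ ^ 2) = -‖y‖ ^ 2 / (2*(1+s)) + (1-θ)/(1+s) * ‖y‖ ^ 2 := by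
          rw [hbdef]
          field_simp
          ring
        rw [heq1, heq2]
        linarith
      calc kk d α y s * G y ^ (θ-1)
          = (s ^ (α-1) * (1+s) ^ (-(d:ℝ))) * cG ^ (θ-1)
            * ((1 + min (‖y‖ ^ 2) T) ^ (κ)
              * (rexp (-‖y‖ ^ 2 / (2*(1+s))) * rexp (-‖y‖ ^ 2/(2+T) * (θ-1)))) := by
            rw [hGpow]
            unfold kk
            ring
        _ ≤ (s ^ (α-1) * (1+s) ^ (-(d:ℝ))) * cG ^ (θ-1)
            * ((1+‖y‖ ^ 2) ^ κ * rexp (-(b * ‖y‖ ^ 2))) := by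
            apply mul_le_mul_of_nonneg_left ?_ (by positivity)
            exact mul_le_mul hminle hexpb (by positivity) (Real.rpow_nonneg (by positivity) _)
    have hikb : 1 + 1/b ≤ (1+2/(2*θ-1)) * (1+s) := by
      rw [hbdef]
      rw [one_div, inv_div]
      have e : (1+2/(2*θ-1)) * (1+s) = (1+s) + 2*(1+s)/(2*θ-1) := by
        field_simp
      rw [e]
      have : 2*(1+s)/(2*θ-1) = (2*θ-1)⁻¹ * (2*(1+s)) := by ring
      linarith [this ▸ le_refl (2*(1+s)/(2*θ-1))]
    have hcGθ : (0:ℝ) ≤ cG ^ (θ-1) := (Real.rpow_pos_of_pos hcG _).le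
    have hAcG : (0:ℝ) ≤ s ^ (α-1) * (1+s) ^ (-(d:ℝ)) * cG ^ (θ-1) := mul_nonneg hA0 hcGθ
    have h2n : (0:ℝ) ≤ 1 + 2/(2*θ-1) := by
      have : (0:ℝ) ≤ 2/(2*θ-1) := div_nonneg (by norm_num) h2θ1.le
      linarith
    have h1bn : (0:ℝ) ≤ 1 + 1/b := by
      have : (0:ℝ) ≤ 1/b := by positivity
      linarith
    have hπb : (0:ℝ) ≤ π/(b/2) := div_nonneg hπ.le (by positivity)
    have hptw2 : ∀ y : Esp d, ENNReal.ofReal (kk d α y s) * ENNReal.ofReal (G y ^ (θ-1))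
        ≤ ENNReal.ofReal (s ^ (α-1) * (1+s) ^ (-(d:ℝ)) * cG ^ (θ-1))
          * ENNReal.ofReal ((1+‖y‖ ^ 2) ^ κ * rexp (-(b * ‖y‖ ^ 2))) := by
      intro y
      rw [← ENNReal.ofReal_mul (kk_nonneg y hs0.le), ← ENNReal.ofReal_mul hAcG]
      exact ENNReal.ofReal_le_ofReal (hstep1 y)
    calc (∫⁻ y : Esp d, ENNReal.ofReal (kk d α y s) * ENNReal.ofReal (G y ^ (θ-1)))
        ≤ ∫⁻ y : Esp d, ENNReal.ofReal (s ^ (α-1) * (1+s) ^ (-(d:ℝ)) * cG ^ (θ-1))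
            * ENNReal.ofReal ((1+‖y‖ ^ 2) ^ κ * rexp (-(b * ‖y‖ ^ 2))) :=
          lintegral_mono hptw2
      _ = ENNReal.ofReal (s ^ (α-1) * (1+s) ^ (-(d:ℝ)) * cG ^ (θ-1))
            * ∫⁻ y : Esp d, ENNReal.ofReal ((1+‖y‖ ^ 2) ^ κ * rexp (-(b * ‖y‖ ^ 2))) :=
          lintegral_const_mul' _ _ ENNReal.ofReal_ne_top
      _ ≤ ENNReal.ofReal (s ^ (α-1) * (1+s) ^ (-(d:ℝ)) * cG ^ (θ-1))
            * ENNReal.ofReal ((1 + 1/b) ^ κ * CK κ * (π/(b/2)) ^ ((d:ℝ)/2)) :=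
          mul_le_mul_right (lintegral_y_aux d hκ0 hb) _
      _ ≤ ENNReal.ofReal (Cbig * (s ^ (α-1) * (1+s) ^ (-((d:ℝ)/2 - κ)))) := by
          rw [← ENNReal.ofReal_mul hAcG]
          apply ENNReal.ofReal_le_ofReal
          have hbb : π/(b/2) = (4*π/(2*θ-1)) * (1+s) := by
            rw [hbdef]
            field_simp
            ring
          have h1b : (1+1/b) ^ κ ≤ (1+2/(2*θ-1)) ^ κ * (1+s) ^ κ := by
            rw [← Real.mul_rpow h2n h1s.le]
            exact Real.rpow_le_rpow h1bn hikb hκ0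
          have hgs : (π/(b/2)) ^ ((d:ℝ)/2)
              = (4*π/(2*θ-1)) ^ ((d:ℝ)/2) * (1+s) ^ ((d:ℝ)/2) := by
            rw [hbb, Real.mul_rpow (by positivity) h1s.le]
          have hcollect : (1+s) ^ (-(d:ℝ)) * ((1+s) ^ κ * (1+s) ^ ((d:ℝ)/2))
              = (1+s) ^ (-((d:ℝ)/2 - κ)) := by
            rw [← Real.rpow_add h1s, ← Real.rpow_add h1s]
            congr 1
            ring
          calc s ^ (α-1) * (1+s) ^ (-(d:ℝ)) * cG ^ (θ-1)
                * ((1 + 1/b) ^ κ * CK κ * (π/(b/2)) ^ ((d:ℝ)/2))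
              ≤ s ^ (α-1) * (1+s) ^ (-(d:ℝ)) * cG ^ (θ-1)
                * (((1+2/(2*θ-1)) ^ κ * (1+s) ^ κ) * CK κ
                  * ((4*π/(2*θ-1)) ^ ((d:ℝ)/2) * (1+s) ^ ((d:ℝ)/2))) := by
                apply mul_le_mul_of_nonneg_left ?_ hAcG
                rw [hgs]
                exact mul_le_mul_of_nonneg_right
                  (mul_le_mul_of_nonneg_right h1b hCKκ.le)
                  (mul_nonneg (Real.rpow_nonneg (by positivity) _)
                    (Real.rpow_nonneg h1s.le _))
            _ = Cbig * (s ^ (α-1) * ((1+s) ^ (-(d:ℝ)) * ((1+s) ^ κ * (1+s) ^ ((d:ℝ)/2)))) := by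
                rw [hCbigdef]
                ring
            _ = Cbig * (s ^ (α-1) * (1+s) ^ (-((d:ℝ)/2 - κ))) := by rw [hcollect]
  calc NN d α θ T
      ≤ ∫⁻ y : Esp d, ENNReal.ofReal (Iy d α T y) * ENNReal.ofReal (G y ^ (θ-1)) :=
        lintegral_mono hpt
    _ = ∫⁻ y : Esp d, ∫⁻ s, ENNReal.ofReal (kk d α y s)
          * ENNReal.ofReal (G y ^ (θ-1)) ∂μ := by
        apply lintegral_congr
        intro y
        have h1 : ENNReal.ofReal (Iy d α T y) = ∫⁻ s, ENNReal.ofReal (kk d α y s) ∂μ := by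
          rw [hμdef]
          exact ofReal_Iy hα hT0 y
        rw [h1]
        exact (lintegral_mul_const' _ _ ENNReal.ofReal_ne_top).symm
    _ = ∫⁻ s, (∫⁻ y : Esp d, ENNReal.ofReal (kk d α y s)
          * ENNReal.ofReal (G y ^ (θ-1))) ∂μ :=
        lintegral_lintegral_swap hjoint.aemeasurable
    _ ≤ ∫⁻ s, ENNReal.ofReal (Cbig * (s ^ (α-1) * (1+s) ^ (-((d:ℝ)/2 - κ)))) ∂μ :=
        lintegral_mono_ae hinner
    _ ≤ ENNReal.ofReal (Cbig * CA * T ^ E) := by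
        calc ∫⁻ s, ENNReal.ofReal (Cbig * (s ^ (α-1) * (1+s) ^ (-((d:ℝ)/2 - κ)))) ∂μ
            = ENNReal.ofReal Cbig
              * ∫⁻ s, ENNReal.ofReal (s ^ (α-1) * (1+s) ^ (-((d:ℝ)/2 - κ))) ∂μ := by
              simp_rw [ENNReal.ofReal_mul hCbig.le]
              exact lintegral_const_mul' _ _ ENNReal.ofReal_ne_top
          _ ≤ ENNReal.ofReal Cbig * ENNReal.ofReal ((1/α + 1/E) * T ^ E) := by
              apply mul_le_mul_right
              rw [hμdef]
              exact lint_w_le hα (by linarith [hκd2]) hE (le_of_eq htopE) (by linarith)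
          _ = ENNReal.ofReal (Cbig * CA * T ^ E) := by
              rw [← ENNReal.ofReal_mul hCbig.le]
              congr 1
              rw [hCAdef]
              ring

end Main


end SB0Aux

open SB0Aux in
/-- Supercritical two-sided bound for `𝒮𝓑₀` for small `ε`. -/
theorem SB0_bounds_supercritical
    (d : ℕ) (hd : 1 ≤ d) (p α : ℝ) (hp : 1 < p) (hα : (d : ℝ) / (p / (p - 1)) < α) :
    ∃ c C : ℝ, 0 < c ∧ c ≤ C ∧ ∃ ε₀ : ℝ, 0 < ε₀ ∧ ∀ ε : ℝ, 0 < ε → ε < ε₀ →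
      c ≤ ε ^ (p * (α - (d : ℝ) / (p / (p - 1))) / 2) * SB0 d α p ε ∧
      ε ^ (p * (α - (d : ℝ) / (p / (p - 1))) / 2) * SB0 d α p ε ≤ C := by
  have hp0 : (0:ℝ) < p := by linarith
  have hp1 : (0:ℝ) < p - 1 := by linarith
  have hpne : p ≠ 0 := hp0.ne'
  have hp1ne : p - 1 ≠ 0 := hp1.ne'
  set θ : ℝ := p/2 with hθdef
  have hθ0 : 0 < θ := by positivity
  have hθhalf : 1/2 < θ := by rw [hθdef]; linarith
  have hqeq : (d:ℝ) / (p/(p-1)) = (d:ℝ) - (d:ℝ)/(2*θ) := by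
    rw [hθdef]
    field_simp
  have hγ : 0 < α - ((d:ℝ) - (d:ℝ)/(2*θ)) := by
    rw [← hqeq]
    linarith
  have hα0 : 0 < α :=
    lt_of_le_of_lt (div_nonneg (Nat.cast_nonneg d) (by positivity)) hα
  have hEexp : p * (α - (d:ℝ)/(p/(p-1))) / 2 = θ*(α - (d:ℝ)) + (d:ℝ)/2 := by
    rw [hθdef]
    field_simp
    ring
  obtain ⟨C, hC0, hCub⟩ : ∃ C : ℝ, 0 < C ∧ ∀ T : ℝ, 4 ≤ T →
      NN d α θ T ≤ ENNReal.ofReal (C * T ^ (θ*(α-(d:ℝ)) + (d:ℝ)/2)) := by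
    rcases le_or_gt 1 θ with h | h
    · exact NN_upper_holder hα0 h hγ
    · rcases le_or_gt α (d:ℝ) with h2 | h2
      · exact NN_upper_small hθhalf h h2 hγ
      · exact NN_upper_big h2 hθ0
  obtain ⟨c, hc0, hclb⟩ := NN_lower (d := d) hα0 hθ0.le
  refine ⟨c, max C c, hc0, le_max_right _ _, 1/4, by norm_num, fun ε hε hε4 => ?_⟩
  set T : ℝ := 1/ε with hTdef
  have hT4 : 4 ≤ T := by
    rw [hTdef, le_div_iff₀ hε]
    linarith
  have hT0 : (0:ℝ) < T := by linarith
  set E : ℝ := θ*(α - (d:ℝ)) + (d:ℝ)/2 with hEdef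
  have hNNub := hCub T hT4
  have hNNlb := hclb T hT4
  have hNNne : NN d α θ T ≠ ⊤ := (lt_of_le_of_lt hNNub ENNReal.ofReal_lt_top).ne
  have hSB : SB0 d α p ε = (NN d α θ T).toReal := SB0_eq hα0 p hε
  have hub : SB0 d α p ε ≤ C * T ^ E := by
    rw [hSB]
    exact ENNReal.toReal_le_of_le_ofReal
      (mul_nonneg hC0.le (Real.rpow_nonneg hT0.le _)) hNNub
  have hlb : c * T ^ E ≤ SB0 d α p ε := by
    rw [hSB]
    exact (ENNReal.ofReal_le_iff_le_toReal hNNne).mp hNNlb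
  have hεE : ε ^ (p * (α - (d:ℝ)/(p/(p-1))) / 2) = ε ^ E := by rw [hEexp, hEdef]
  have hprod : ε ^ E * T ^ E = 1 := by
    rw [hTdef, ← Real.mul_rpow hε.le (by positivity), mul_one_div_cancel hε.ne',
      Real.one_rpow]
  have hεpos : 0 < ε ^ E := Real.rpow_pos_of_pos hε _
  constructor
  · rw [hεE]
    calc c = c * (ε ^ E * T ^ E) := by rw [hprod]; ring
      _ = ε ^ E * (c * T ^ E) := by ring
      _ ≤ ε ^ E * SB0 d α p ε := mul_le_mul_of_nonneg_left hlb hεpos.le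
  · rw [hεE]
    calc ε ^ E * SB0 d α p ε ≤ ε ^ E * (C * T ^ E) :=
        mul_le_mul_of_nonneg_left hub hεpos.le
      _ = C * (ε ^ E * T ^ E) := by ring
      _ = C := by rw [hprod, mul_one]
      _ ≤ max C c := le_max_left _ _

end
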